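/- Let A be a Banach algebra and 1 < p < ∞. Then the projective tensor product ℓ^p ⊗̂ A is Arens regular if and only if A is Arens regular, where ℓ^p carries pointwise multiplication. -/

import Mathlib

open ContinuousLinearMap NormedSpace Filter Topology Metric

noncomputable section

namespace NormedSpace

variable (𝕜 : Type*) [NontriviallyNormedField 𝕜] (E : Type*) [SeminormedAddCommGroup E]
  [NormedSpace 𝕜 E]

/-- The topological dual of a seminormed space `E` (the former Mathlib `NormedSpace.Dual`). -/
abbrev Dual : Type _ := E →L[𝕜] 𝕜

end NormedSpace

namespace Arens

section Bilinear

variable {X Y Z : Type*} [NormedAddCommGroup X] [NormedSpace ℂ X]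
  [NormedAddCommGroup Y] [NormedSpace ℂ Y] [NormedAddCommGroup Z] [NormedSpace ℂ Z]

/-- The Arens adjoint `m*` of a bounded bilinear map `m : X × Y → Z`,
`⟨m*(z',x), y⟩ = ⟨z', m(x,y)⟩`. -/
def adj (f : X →L[ℂ] Y →L[ℂ] Z) : Dual ℂ Z →L[ℂ] X →L[ℂ] Dual ℂ Y :=
  ((ContinuousLinearMap.compL ℂ X (Y →L[ℂ] Z) (Y →L[ℂ] ℂ)).flip f).comp
    (ContinuousLinearMap.compL ℂ Y Z ℂ)

@[simp] lemma adj_apply (f : X →L[ℂ] Y →L[ℂ] Z) (z' : Dual ℂ Z) (x : X) (y : Y) :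
    adj f z' x y = z' (f x y) := rfl

/-- The Arens triple-adjoint extension `m*** : X** × Y** → Z**` of a bounded
bilinear map `m : X × Y → Z`. -/
def ext3 (f : X →L[ℂ] Y →L[ℂ] Z) :
    Dual ℂ (Dual ℂ X) →L[ℂ] Dual ℂ (Dual ℂ Y) →L[ℂ] Dual ℂ (Dual ℂ Z) :=
  adj (adj (adj f))

/-- Weak-star convergence of a net `(a i)` of `X` (canonically embedded in `X**`)
to an element `F` of the bidual `X**`. -/
def WStarTendsto {ι : Type*} (a : ι → X) (l : Filter ι) (F : Dual ℂ (Dual ℂ X)) : Prop :=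
  ∀ x' : Dual ℂ X, Tendsto (fun i => x' (a i)) l (𝓝 (F x'))

end Bilinear

section Algebra

variable (A : Type*) [NonUnitalNormedRing A] [NormedSpace ℂ A]
  [IsScalarTower ℂ A A] [SMulCommClass ℂ A A]

/-- The multiplication of a (non-unital) Banach algebra as a bounded bilinear map. -/
abbrev mulCLM : A →L[ℂ] A →L[ℂ] A := ContinuousLinearMap.mul ℂ A

/-- The first Arens product on the bidual `A**`. -/
def fstArens (F G : Dual ℂ (Dual ℂ A)) : Dual ℂ (Dual ℂ A) := ext3 (mulCLM A) F G

/-- The second Arens product on the bidual `A**` (`m^{t***t}`). -/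
def sndArens (F G : Dual ℂ (Dual ℂ A)) : Dual ℂ (Dual ℂ A) :=
  ext3 ((mulCLM A).flip) G F

/-- A Banach algebra is Arens regular when its two Arens products coincide. -/
def ArensRegular : Prop := ∀ F G : Dual ℂ (Dual ℂ A), fstArens A F G = sndArens A F G

end Algebra

section ModuleWC

universe u
variable {A : Type u} {B : Type*} [NonUnitalNormedRing A] [NormedSpace ℂ A]
  [NormedAddCommGroup B] [NormedSpace ℂ B]

/-- For a left Banach `A`-module action `πl` on `B`, the element `b' a ∈ B*`,
`⟨b' a, b⟩ = ⟨b', a • b⟩`. -/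
def dualSmulL (πl : A →L[ℂ] B →L[ℂ] B) (b' : Dual ℂ B) (a : A) : Dual ℂ B := adj πl b' a

/-- The Arens extension `b' a'' ∈ B***`, `⟨b'', b' a''⟩ = ⟨π_ℓ***(a'', b''), b'⟩`. -/
def dualSmulLStar (πl : A →L[ℂ] B →L[ℂ] B) (b' : Dual ℂ B) (F : Dual ℂ (Dual ℂ A)) :
    Dual ℂ (Dual ℂ (Dual ℂ B)) :=
  (inclusionInDoubleDual ℂ (Dual ℂ B) b').comp (ext3 πl F)

/-- `b' ∈ B*` has the left-weak*-weak convergence property (`Lw*wc`) with respect to `A`: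
for every net `(a_α) ⊆ A` with `a_α → a''` weak* in `A**`, the net `b' a_α` converges
weakly to `b' a''` in `B*`. -/
def LWStarWC (πl : A →L[ℂ] B →L[ℂ] B) (b' : Dual ℂ B) : Prop :=
  ∀ (ι : Type u) (l : Filter ι) (a : ι → A) (F : Dual ℂ (Dual ℂ A)),
    WStarTendsto a l F →
    ∀ b'' : Dual ℂ (Dual ℂ B),
      Tendsto (fun i => b'' (dualSmulL πl b' (a i))) l (𝓝 (dualSmulLStar πl b' F b''))

/-- For a right Banach `A`-module action `πr` on `B`, the element `a b' ∈ B*`,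
`⟨a b', b⟩ = ⟨b', b • a⟩`. -/
def dualSmulR (πr : B →L[ℂ] A →L[ℂ] B) (a : A) (b' : Dual ℂ B) : Dual ℂ B :=
  adj πr.flip b' a

/-- The Arens extension `a'' b' ∈ B***`, `⟨b'', a'' b'⟩ = ⟨π_r^{t***}(a'', b''), b'⟩`. -/
def dualSmulRStar (πr : B →L[ℂ] A →L[ℂ] B) (F : Dual ℂ (Dual ℂ A)) (b' : Dual ℂ B) :
    Dual ℂ (Dual ℂ (Dual ℂ B)) :=
  (inclusionInDoubleDual ℂ (Dual ℂ B) b').comp (ext3 πr.flip F)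

/-- `b' ∈ B*` has the right-weak*-weak convergence property (`Rw*wc`) with respect to `A`. -/
def RWStarWC (πr : B →L[ℂ] A →L[ℂ] B) (b' : Dual ℂ B) : Prop :=
  ∀ (ι : Type u) (l : Filter ι) (a : ι → A) (F : Dual ℂ (Dual ℂ A)),
    WStarTendsto a l F →
    ∀ b'' : Dual ℂ (Dual ℂ B),
      Tendsto (fun i => b'' (dualSmulR πr (a i) b')) l (𝓝 (dualSmulRStar πr F b' b''))

end ModuleWC

section AlgebraWC

variable (A : Type u) [NonUnitalNormedRing A] [NormedSpace ℂ A]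
  [IsScalarTower ℂ A A] [SMulCommClass ℂ A A]

/-- The product `a'' a' ∈ A*` (first step of the first Arens product):
`⟨a'' a', a⟩ = ⟨a'', a' a⟩` where `⟨a' a, b⟩ = ⟨a', a b⟩`. -/
def biSmul (F : Dual ℂ (Dual ℂ A)) (a' : Dual ℂ A) : Dual ℂ A :=
  F.comp (adj (mulCLM A) a')

/-- The element `a · a' ∈ A*`, `⟨a a', b⟩ = ⟨a', b a⟩`. -/
def leftMulDual (a : A) (a' : Dual ℂ A) : Dual ℂ A := a'.comp ((mulCLM A).flip a)

/-- `A*` has the `Rw*wc`-property with respect to `A`: for every `a' ∈ A*` and every net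
`(a_α) ⊆ A` with `a_α → a''` weak* in `A**`, the net `a_α a'` (`⟨a_α a', b⟩ = ⟨a', b a_α⟩`)
converges weakly in `A*` to `a'' a'`. -/
def RWStarWCDualProp : Prop :=
  ∀ (a' : Dual ℂ A) (ι : Type u) (l : Filter ι) (a : ι → A) (F : Dual ℂ (Dual ℂ A)),
    WStarTendsto a l F →
    ∀ x'' : Dual ℂ (Dual ℂ A),
      Tendsto (fun i => x'' (leftMulDual A (a i) a')) l (𝓝 (x'' (biSmul A F a')))

/-- `A*` has the `Lw*wc`-property with respect to `A`. -/
def LWStarWCDualProp : Prop := ∀ a' : Dual ℂ A, LWStarWC (mulCLM A) a'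

/-- `A**` has the `Lw*wc`-property with respect to `A`: for every `x'' ∈ A**` and every net
`(a_α) ⊆ A` with `a_α → a''` weak* in `A**`, the net `x'' a_α` converges weakly in `A**`
to `x'' a''`. -/
def LWStarWCBidualProp : Prop :=
  ∀ (x'' : Dual ℂ (Dual ℂ A)) (ι : Type u) (l : Filter ι) (a : ι → A) (F : Dual ℂ (Dual ℂ A)),
    WStarTendsto a l F →
    ∀ Φ : Dual ℂ (Dual ℂ (Dual ℂ A)),
      Tendsto (fun i => Φ (fstArens A x'' (inclusionInDoubleDual ℂ A (a i)))) l
        (𝓝 (Φ (fstArens A x'' F)))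

/-- `D : A → A*` is a derivation: `D(ab) = a·D(b) + D(a)·b`, where
`(a·f)(x) = f(x a)` and `(f·b)(x) = f(b x)`. -/
def IsDerivation (D : A →L[ℂ] Dual ℂ A) : Prop :=
  ∀ a b : A, D (a * b) = (D b).comp ((mulCLM A).flip a) + (D a).comp (mulCLM A b)

/-- `A` is weakly amenable: every bounded derivation `D : A → A*` is inner. -/
def WeaklyAmenable : Prop :=
  ∀ D : A →L[ℂ] Dual ℂ A, IsDerivation A D →
    ∃ f : Dual ℂ A, ∀ a : A, D a = f.comp ((mulCLM A).flip a) - f.comp (mulCLM A a)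

/-- The left action of `A**` (with the first Arens product) on `A***`:
`(F·Φ)(G) = Φ(G F)`. -/
def ddLeftAct (F : Dual ℂ (Dual ℂ A)) (Φ : Dual ℂ (Dual ℂ (Dual ℂ A))) :
    Dual ℂ (Dual ℂ (Dual ℂ A)) :=
  Φ.comp ((ext3 (mulCLM A)).flip F)

/-- The right action of `A**` (with the first Arens product) on `A***`:
`(Φ·F)(G) = Φ(F G)`. -/
def ddRightAct (F : Dual ℂ (Dual ℂ A)) (Φ : Dual ℂ (Dual ℂ (Dual ℂ A))) :
    Dual ℂ (Dual ℂ (Dual ℂ A)) :=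
  Φ.comp (ext3 (mulCLM A) F)

/-- A bounded map `D : A** → A***` is a derivation for the first Arens product. -/
def IsDerivationDD (D : Dual ℂ (Dual ℂ A) →L[ℂ] Dual ℂ (Dual ℂ (Dual ℂ A))) : Prop :=
  ∀ F G : Dual ℂ (Dual ℂ A),
    D (fstArens A F G) = ddLeftAct A F (D G) + ddRightAct A G (D F)

/-- `A**` (with the first Arens product) is weakly amenable. -/
def WeaklyAmenableDD : Prop :=
  ∀ D : Dual ℂ (Dual ℂ A) →L[ℂ] Dual ℂ (Dual ℂ (Dual ℂ A)), IsDerivationDD A D →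
    ∃ Φ : Dual ℂ (Dual ℂ (Dual ℂ A)), ∀ F, D F = ddLeftAct A F Φ - ddRightAct A F Φ

/-- `A*** A** ⊆ A*`: each product `x''' x''` (`⟨x''' x'', a''⟩ = ⟨x''', x'' a''⟩`)
lies in the canonical image of `A*` in `A***`. -/
def TripleDualMulIntoDual : Prop :=
  ∀ (Φ : Dual ℂ (Dual ℂ (Dual ℂ A))) (F : Dual ℂ (Dual ℂ A)),
    ∃ a' : Dual ℂ A, ddRightAct A F Φ = inclusionInDoubleDual ℂ (Dual ℂ A) a'

end AlgebraWC

section DualMap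

variable {X Y : Type*} [NormedAddCommGroup X] [NormedSpace ℂ X]
  [NormedAddCommGroup Y] [NormedSpace ℂ Y]

/-- The Banach-space adjoint of a bounded operator. -/
def dualMap' (T : X →L[ℂ] Y) : Dual ℂ Y →L[ℂ] Dual ℂ X :=
  (ContinuousLinearMap.compL ℂ X Y ℂ).flip T

/-- The second adjoint `D'' : A** → A***` of `D : A → A*`. -/
def secondAdjoint {A : Type*} [NonUnitalNormedRing A] [NormedSpace ℂ A]
    (D : A →L[ℂ] Dual ℂ A) :
    Dual ℂ (Dual ℂ A) →L[ℂ] Dual ℂ (Dual ℂ (Dual ℂ A)) :=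
  dualMap' (dualMap' D)

end DualMap

section Biregular

variable (A B : Type*) [NonUnitalNormedRing A] [NormedSpace ℂ A]
  [NonUnitalNormedRing B] [NormedSpace ℂ B]

/-- A bounded bilinear form `m : A × B → ℂ` is biregular (Ülger): for any sequences
`(a_i), (aa2_j)` in the unit ball of `A` and `(b_i), (bb_j)` in the unit ball of `B`,
the two iterated limits of `m(a_i aa2_j, b_i bb_j)` coincide whenever both exist. -/
def Biregular (m : A →L[ℂ] B →L[ℂ] ℂ) : Prop :=
  ∀ (a aa2 : ℕ → A) (b bb : ℕ → B),
    (∀ i, ‖a i‖ ≤ 1) → (∀ j, ‖aa2 j‖ ≤ 1) → (∀ i, ‖b i‖ ≤ 1) → (∀ j, ‖bb j‖ ≤ 1) →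
    ∀ (g h : ℕ → ℂ) (L L' : ℂ),
      (∀ i, Tendsto (fun j => m (a i * aa2 j) (b i * bb j)) atTop (𝓝 (g i))) →
      Tendsto g atTop (𝓝 L) →
      (∀ j, Tendsto (fun i => m (a i * aa2 j) (b i * bb j)) atTop (𝓝 (h j))) →
      Tendsto h atTop (𝓝 L') → L = L'

/-- Arens regularity of the projective tensor product `A ⊗̂ B`.  By Ülger's theorem
(`[22, Theorem 3.4]`), `A ⊗̂ B` is Arens regular if and only if every bounded bilinear
form `m : A × B → ℂ` is biregular; since the dual of `A ⊗̂ B` is exactly the space of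
bounded bilinear forms on `A × B`, we take this equivalent characterization as the
formalization of Arens regularity of `A ⊗̂ B`. -/
def ProjArensRegular : Prop := ∀ m : A →L[ℂ] B →L[ℂ] ℂ, Biregular A B m

end Biregular

end Arens

namespace Arens

section lpAlgebra

open scoped ENNReal

variable (p : ℝ≥0∞) [Fact (1 ≤ p)]

lemma lp_norm_mul_pointwise (h2 : p ≠ ∞)
    (f g : lp (fun _ : ℕ => ℂ) p) (i : ℕ) :
    ‖f i * g i‖ ^ p.toReal ≤ ‖f i‖ ^ p.toReal * ‖g‖ ^ p.toReal := by
  have hp0 : p ≠ 0 := (zero_lt_one.trans_le (Fact.out (p := 1 ≤ p))).ne'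
  have hpt : 0 < p.toReal := ENNReal.toReal_pos hp0 h2
  have h3 : ‖f i * g i‖ ≤ ‖f i‖ * ‖g‖ := by
    rw [norm_mul]
    exact mul_le_mul_of_nonneg_left (lp.norm_apply_le_norm hp0 g i) (norm_nonneg _)
  calc ‖f i * g i‖ ^ p.toReal ≤ (‖f i‖ * ‖g‖) ^ p.toReal :=
        Real.rpow_le_rpow (norm_nonneg _) h3 hpt.le
    _ = ‖f i‖ ^ p.toReal * ‖g‖ ^ p.toReal :=
        Real.mul_rpow (norm_nonneg _) (norm_nonneg _)

lemma memℓp_mul (h2 : p ≠ ∞) (f g : lp (fun _ : ℕ => ℂ) p) :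
    Memℓp (⇑f * ⇑g) p := by
  have hp0 : p ≠ 0 := (zero_lt_one.trans_le (Fact.out (p := 1 ≤ p))).ne'
  have hpt : 0 < p.toReal := ENNReal.toReal_pos hp0 h2
  apply memℓp_gen
  have hs : Summable fun i => ‖f i‖ ^ p.toReal * ‖g‖ ^ p.toReal :=
    ((lp.memℓp f).summable hpt).mul_right _
  refine hs.of_nonneg_of_le (fun i => Real.rpow_nonneg (norm_nonneg _) _) fun i => ?_
  exact lp_norm_mul_pointwise p h2 f g i

/-- Pointwise multiplication on `ℓᵖ` (`1 ≤ p < ∞`). -/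
@[reducible]
def lpMul (h2 : p ≠ ∞) : Mul (lp (fun _ : ℕ => ℂ) p) :=
  ⟨fun f g => ⟨⇑f * ⇑g, memℓp_mul p h2 f g⟩⟩

/-- Pointwise multiplication makes `ℓᵖ` (`1 ≤ p < ∞`) a non-unital ring. -/
@[reducible]
def lpNonUnitalRing (h2 : p ≠ ∞) : NonUnitalRing (lp (fun _ : ℕ => ℂ) p) :=
  letI : Mul (lp (fun _ : ℕ => ℂ) p) := lpMul p h2
  Function.Injective.nonUnitalRing (fun f : lp (fun _ : ℕ => ℂ) p => (f : ∀ _ : ℕ, ℂ))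
    Subtype.coe_injective (lp.coeFn_zero _ p) lp.coeFn_add (fun _ _ => rfl) lp.coeFn_neg
    lp.coeFn_sub (fun _ _ => rfl) (fun _ _ => rfl)

lemma lp_norm_mul_le (h2 : p ≠ ∞) :
    ∀ f g : lp (fun _ : ℕ => ℂ) p,
      letI : Mul (lp (fun _ : ℕ => ℂ) p) := lpMul p h2
      ‖f * g‖ ≤ ‖f‖ * ‖g‖ := by
  intro f g
  have hp0 : p ≠ 0 := (zero_lt_one.trans_le (Fact.out (p := 1 ≤ p))).ne'
  have hpt : 0 < p.toReal := ENNReal.toReal_pos hp0 h2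
  letI : Mul (lp (fun _ : ℕ => ℂ) p) := lpMul p h2
  refine lp.norm_le_of_tsum_le hpt (mul_nonneg (norm_nonneg f) (norm_nonneg g)) ?_
  have hfg : Summable fun i => ‖f i‖ ^ p.toReal * ‖g‖ ^ p.toReal :=
    ((lp.memℓp f).summable hpt).mul_right _
  have hle : ∀ i : ℕ, ‖(f * g) i‖ ^ p.toReal ≤ ‖f i‖ ^ p.toReal * ‖g‖ ^ p.toReal :=
    fun i => lp_norm_mul_pointwise p h2 f g i
  calc (∑' i : ℕ, ‖(f * g) i‖ ^ p.toReal)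
      ≤ ∑' i : ℕ, ‖f i‖ ^ p.toReal * ‖g‖ ^ p.toReal :=
        Summable.tsum_le_tsum hle ((lp.memℓp (f * g)).summable hpt) hfg
    _ = (∑' i : ℕ, ‖f i‖ ^ p.toReal) * ‖g‖ ^ p.toReal := tsum_mul_right
    _ = ‖f‖ ^ p.toReal * ‖g‖ ^ p.toReal := by rw [← lp.norm_rpow_eq_tsum hpt f]
    _ = (‖f‖ * ‖g‖) ^ p.toReal :=
        (Real.mul_rpow (norm_nonneg _) (norm_nonneg _)).symm

/-- `ℓᵖ` (`1 ≤ p < ∞`) with pointwise multiplication is a (non-unital) Banach algebra. -/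
@[reducible]
def lpNonUnitalNormedRing (h2 : p ≠ ∞) :
    NonUnitalNormedRing (lp (fun _ : ℕ => ℂ) p) :=
  letI : Mul (lp (fun _ : ℕ => ℂ) p) := lpMul p h2
  letI R : NonUnitalRing (lp (fun _ : ℕ => ℂ) p) := lpNonUnitalRing p h2
  { lp.normedAddCommGroup, R with
    norm_mul_le := fun f g => lp_norm_mul_le p h2 f g }

end lpAlgebra

end Arens

open scoped ENNReal

namespace Arens

section Helly
variable {A : Type*} [NormedAddCommGroup A] [NormedSpace ℂ A]

/-- Helly's theorem: finitely many functionals can be simultaneously interpolated by an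
element of the ball, with exact values prescribed by an element of the bidual of norm `< 1`. -/
theorem helly {n : ℕ} (f : Fin n → Dual ℂ A) (F : Dual ℂ (Dual ℂ A)) (hF : ‖F‖ < 1) :
    ∃ b : A, ‖b‖ ≤ 1 ∧ ∀ k, f k b = F (f k) := by
  classical
  -- Step 1: exact interpolation without norm control
  set T : A →ₗ[ℂ] (Fin n → ℂ) := LinearMap.pi fun k => (f k : A →ₗ[ℂ] ℂ) with hT
  have hw : (fun k => F (f k)) ∈ LinearMap.range T := by
    by_contra hwmem
    set q : (Fin n → ℂ) ⧸ LinearMap.range T :=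
      Submodule.Quotient.mk (fun k => F (f k)) with hq
    have hq0 : q ≠ 0 := by
      simpa [hq, Submodule.Quotient.mk_eq_zero] using hwmem
    have : ¬ ∀ ξ : Module.Dual ℂ ((Fin n → ℂ) ⧸ LinearMap.range T), ξ q = 0 := by
      rw [Module.forall_dual_apply_eq_zero_iff]; exact hq0
    obtain ⟨ξ, hξ⟩ := not_forall.1 this
    set g : (Fin n → ℂ) →ₗ[ℂ] ℂ := ξ.comp (LinearMap.range T).mkQ with hg
    have hgT : ∀ x : A, g (T x) = 0 := by
      intro x
      have : Submodule.Quotient.mk (p := LinearMap.range T) (T x) = 0 := by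
        rw [Submodule.Quotient.mk_eq_zero]; exact ⟨x, rfl⟩
      simp only [hg, LinearMap.comp_apply, Submodule.mkQ_apply, this, map_zero]
    -- express g via coordinates
    set c : Fin n → ℂ := fun k => g fun j => if k = j then 1 else 0 with hc
    set Φ : Dual ℂ A := ∑ k, c k • f k with hΦ
    have hΦ0 : Φ = 0 := by
      ext x
      have := (LinearMap.pi_apply_eq_sum_univ g (T x)).symm
      simp only [hΦ, ContinuousLinearMap.sum_apply, ContinuousLinearMap.coe_smul',
        Pi.smul_apply, smul_eq_mul, ContinuousLinearMap.zero_apply]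
      rw [show (0 : ℂ) = g (T x) from (hgT x).symm, LinearMap.pi_apply_eq_sum_univ g (T x)]
      refine Finset.sum_congr rfl fun k _ => ?_
      have : T x k = f k x := rfl
      rw [this, smul_eq_mul, mul_comm]
    have h1 : F Φ = 0 := by rw [hΦ0, map_zero]
    have h2 : F Φ = g fun k => F (f k) := by
      rw [hΦ]
      rw [map_sum]
      rw [LinearMap.pi_apply_eq_sum_univ g (fun k => F (f k))]
      refine Finset.sum_congr rfl fun k _ => ?_
      rw [map_smul, smul_eq_mul, smul_eq_mul, mul_comm]
    rw [h2] at h1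
    exact hξ h1
  obtain ⟨b₀, hb₀⟩ := hw
  have hb₀' : ∀ k, f k b₀ = F (f k) := fun k => congrFun hb₀ k
  -- Step 2: norm control via the quotient by the common kernel
  set K : Submodule ℂ A := ⨅ k, LinearMap.ker ((f k : A →ₗ[ℂ] ℂ)) with hK
  haveI hKc : IsClosed (K : Set A) := by
    have : (K : Set A) = ⋂ k, (LinearMap.ker ((f k : A →ₗ[ℂ] ℂ)) : Set A) := by
      simp [hK, Submodule.coe_iInf]
    rw [this]
    exact isClosed_iInter fun k => ContinuousLinearMap.isClosed_ker (f k)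
  set mkC : A →L[ℂ] (A ⧸ K) := LinearMap.mkContinuous K.mkQ 1
    (fun x => by simpa [one_mul] using Submodule.Quotient.norm_mk_le K x) with hmkC
  have hmk_norm : ‖mkC‖ ≤ 1 := LinearMap.mkContinuous_norm_le _ zero_le_one _
  have hqle : ‖(Submodule.Quotient.mk b₀ : A ⧸ K)‖ ≤ ‖F‖ := by
    by_contra hgt
    push_neg at hgt
    have hne : (Submodule.Quotient.mk b₀ : A ⧸ K) ≠ 0 := by
      intro h0
      rw [h0, norm_zero] at hgt
      exact (norm_nonneg F).not_gt hgt
    obtain ⟨gd, hgd1, hgdx⟩ := exists_dual_vector ℂ (Submodule.Quotient.mk b₀ : A ⧸ K) (norm_ne_zero_iff.mpr hne)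
    set f' : Dual ℂ A := gd.comp mkC with hf'
    have hker : ⨅ k, LinearMap.ker ((f k : A →ₗ[ℂ] ℂ)) ≤ LinearMap.ker (f' : A →ₗ[ℂ] ℂ) := by
      intro x hx
      have hxK : x ∈ K := by
        rw [hK, Submodule.mem_iInf]
        intro k
        exact (Submodule.mem_iInf _).1 hx k
      have : (Submodule.Quotient.mk x : A ⧸ K) = 0 := by
        rw [Submodule.Quotient.mk_eq_zero]; exact hxK
      simp only [LinearMap.mem_ker, ContinuousLinearMap.coe_coe, hf',
        ContinuousLinearMap.comp_apply]
      have hmx : mkC x = (Submodule.Quotient.mk x : A ⧸ K) := rfl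
      rw [hmx, this, map_zero]
    have hspan := mem_span_of_iInf_ker_le_ker hker
    obtain ⟨c, hc⟩ := (Submodule.mem_span_range_iff_exists_fun ℂ).1 hspan
    set f'' : Dual ℂ A := ∑ k, c k • f k with hf''
    have hf'eq : f'' = f' := by
      apply ContinuousLinearMap.coe_injective
      push_cast [hf'']
      convert hc using 2
    have hFf' : F f' = ∑ k, c k * F (f k) := by
      rw [← hf'eq, hf'', map_sum]
      exact Finset.sum_congr rfl fun k _ => by rw [map_smul, smul_eq_mul]
    have hfb : F f' = f' b₀ := by
      rw [hFf']
      have : f' b₀ = f'' b₀ := by rw [hf'eq]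
      rw [this, hf'']
      simp only [ContinuousLinearMap.sum_apply, ContinuousLinearMap.coe_smul', Pi.smul_apply,
        smul_eq_mul]
      exact Finset.sum_congr rfl fun k _ => by rw [hb₀' k]
    have hnorm1 : ‖F f'‖ ≤ ‖F‖ := by
      calc ‖F f'‖ ≤ ‖F‖ * ‖f'‖ := F.le_opNorm _
        _ ≤ ‖F‖ * 1 := by
            refine mul_le_mul_of_nonneg_left ?_ (norm_nonneg F)
            calc ‖f'‖ ≤ ‖gd‖ * ‖mkC‖ := ContinuousLinearMap.opNorm_comp_le _ _
              _ ≤ 1 * 1 := by rw [hgd1]; exact mul_le_mul_of_nonneg_left hmk_norm zero_le_one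
              _ = 1 := one_mul 1
        _ = ‖F‖ := mul_one _
    have hval : f' b₀ = (‖(Submodule.Quotient.mk b₀ : A ⧸ K)‖ : ℂ) := by
      rw [hf']
      exact hgdx
    rw [hfb, hval] at hnorm1
    rw [Complex.norm_real, Real.norm_of_nonneg (norm_nonneg _)] at hnorm1
    exact hgt.not_ge hnorm1
  obtain ⟨bf, hbf_mk, hbf_norm⟩ :=
    Submodule.Quotient.norm_mk_lt (Submodule.Quotient.mk b₀ : A ⧸ K) (by linarith : (0:ℝ) < 1 - ‖F‖)
  refine ⟨bf, by linarith, fun k => ?_⟩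
  have hmem : bf - b₀ ∈ K := by
    rw [← Submodule.Quotient.eq]
    exact hbf_mk
  have : f k (bf - b₀) = 0 := by
    have := (Submodule.mem_iInf _).1 hmem k
    exact this
  have hfk : f k bf = f k b₀ := by
    have h2 := map_sub (f k) bf b₀
    rw [this] at h2
    exact sub_eq_zero.1 h2.symm
  rw [hfk, hb₀' k]

end Helly
end Arens

namespace Arens

section Seq

private noncomputable def twAux {α : Type*} (P : ∀ n, (Fin n → α) → (Fin n → α) → Prop)
    (h0 : P 0 Fin.elim0 Fin.elim0)
    (hstep : ∀ n u v, P n u v → ∃ x y, P (n + 1) (Fin.snoc u x) (Fin.snoc v y)) :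
    ∀ n, { p : (Fin n → α) × (Fin n → α) // P n p.1 p.2 }
  | 0 => ⟨(Fin.elim0, Fin.elim0), h0⟩
  | n + 1 =>
    let t := twAux P h0 hstep n
    ⟨(Fin.snoc t.1.1 (hstep n t.1.1 t.1.2 t.2).choose,
      Fin.snoc t.1.2 (hstep n t.1.1 t.1.2 t.2).choose_spec.choose),
      (hstep n t.1.1 t.1.2 t.2).choose_spec.choose_spec⟩

/-- Dependent choice for growing pairs of tuples. -/
theorem exists_seq_pairs {α : Type*} (P : ∀ n, (Fin n → α) → (Fin n → α) → Prop)
    (h0 : P 0 Fin.elim0 Fin.elim0)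
    (hstep : ∀ n u v, P n u v → ∃ x y, P (n + 1) (Fin.snoc u x) (Fin.snoc v y)) :
    ∃ b bb : ℕ → α, ∀ n, P n (fun i : Fin n => b i) fun i : Fin n => bb i := by
  classical
  set tw := twAux P h0 hstep with htw_def
  have htw1 : ∀ n, (tw (n + 1)).1.1 =
      Fin.snoc (tw n).1.1 (hstep n (tw n).1.1 (tw n).1.2 (tw n).2).choose := by
    intro n; rw [htw_def]; rw [twAux]
  have htw2 : ∀ n, (tw (n + 1)).1.2 =
      Fin.snoc (tw n).1.2 (hstep n (tw n).1.1 (tw n).1.2 (tw n).2).choose_spec.choose := by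
    intro n; rw [htw_def]; rw [twAux]
  set b : ℕ → α := fun n => (tw (n + 1)).1.1 (Fin.last n) with hb
  set bb : ℕ → α := fun n => (tw (n + 1)).1.2 (Fin.last n) with hbb
  have hagree : ∀ n (i : Fin n), (tw n).1.1 i = b i ∧ (tw n).1.2 i = bb i := by
    intro n
    induction n with
    | zero => exact fun i => i.elim0
    | succ n ih =>
      intro i
      refine Fin.lastCases ⟨rfl, rfl⟩ ?_ i
      · intro j
        have h1 : (tw (n + 1)).1.1 j.castSucc = (tw n).1.1 j := by
          rw [htw1 n]; exact Fin.snoc_castSucc _ _ _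
        have h2 : (tw (n + 1)).1.2 j.castSucc = (tw n).1.2 j := by
          rw [htw2 n]; exact Fin.snoc_castSucc _ _ _
        rw [h1, h2]
        simpa [Fin.coe_castSucc] using ih j
  refine ⟨b, bb, fun n => ?_⟩
  have h1 : (fun i : Fin n => b i) = (tw n).1.1 := funext fun i => ((hagree n i).1).symm
  have h2 : (fun i : Fin n => bb i) = (tw n).1.2 := funext fun i => ((hagree n i).2).symm
  rw [h1, h2]
  exact (tw n).2

end Seq

section Interp

variable {A : Type*} [NonUnitalNormedRing A] [NormedSpace ℂ A]
  [IsScalarTower ℂ A A] [SMulCommClass ℂ A A]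

/-- The two interpolating sequences used in Ülger's double-limit criterion. -/
theorem exists_interp (F G : Dual ℂ (Dual ℂ A)) (hF : ‖F‖ < 1) (hG : ‖G‖ < 1)
    (φ ψ χ : Dual ℂ A) :
    ∃ b bb : ℕ → A, (∀ n, ‖b n‖ ≤ 1) ∧ (∀ n, ‖bb n‖ ≤ 1) ∧
      (∀ n, ψ (b n) = F ψ) ∧ (∀ n, χ (bb n) = G χ) ∧
      (∀ i j, j < i → φ (b i * bb j) = F (φ.comp ((mulCLM A).flip (bb j)))) ∧
      (∀ i j, i ≤ j → φ (b i * bb j) = G (φ.comp (mulCLM A (b i)))) := by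
  classical
  set P : ∀ n, (Fin n → A) → (Fin n → A) → Prop := fun n u v =>
    (∀ i, ‖u i‖ ≤ 1 ∧ ‖v i‖ ≤ 1 ∧ ψ (u i) = F ψ ∧ χ (v i) = G χ) ∧
      (∀ i j : Fin n,
        ((j : ℕ) < (i : ℕ) → φ (u i * v j) = F (φ.comp ((mulCLM A).flip (v j)))) ∧
        ((i : ℕ) ≤ (j : ℕ) → φ (u i * v j) = G (φ.comp (mulCLM A (u i))))) with hPdef
  have h0 : P 0 Fin.elim0 Fin.elim0 := ⟨fun i => i.elim0, fun i => i.elim0⟩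
  have hstep : ∀ n u v, P n u v → ∃ x y, P (n + 1) (Fin.snoc u x) (Fin.snoc v y) := by
    intro n u v hPuv
    obtain ⟨x, hx1, hx2⟩ := helly
      (Fin.snoc (fun j : Fin n => φ.comp ((mulCLM A).flip (v j))) ψ) F hF
    have hxψ : ψ x = F ψ := by
      have := hx2 (Fin.last n)
      simpa [Fin.snoc_last] using this
    have hxv : ∀ j : Fin n, φ (x * v j) = F (φ.comp ((mulCLM A).flip (v j))) := by
      intro j
      have := hx2 j.castSucc
      simpa [Fin.snoc_castSucc] using this
    set u' : Fin (n + 1) → A := Fin.snoc u x with hu'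
    obtain ⟨y, hy1, hy2⟩ := helly
      (Fin.snoc (fun i : Fin (n + 1) => φ.comp (mulCLM A (u' i))) χ) G hG
    have hyχ : χ y = G χ := by
      have := hy2 (Fin.last (n + 1))
      simpa [Fin.snoc_last] using this
    have hyu : ∀ i : Fin (n + 1), φ (u' i * y) = G (φ.comp (mulCLM A (u' i))) := by
      intro i
      have := hy2 i.castSucc
      simpa [Fin.snoc_castSucc] using this
    refine ⟨x, y, ⟨?_, ?_⟩⟩
    · intro i
      refine Fin.lastCases ?_ ?_ i
      · simp only [Fin.snoc_last]
        exact ⟨hx1, hy1, hxψ, hyχ⟩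
      · intro j
        simp only [Fin.snoc_castSucc]
        exact hPuv.1 j
    · intro i j
      constructor
      · -- j < i
        intro hji
        rcases Fin.eq_castSucc_or_eq_last j with ⟨j₀, rfl⟩ | rfl
        · rw [Fin.snoc_castSucc]
          rcases Fin.eq_castSucc_or_eq_last i with ⟨i₀, rfl⟩ | rfl
          · rw [show (Fin.snoc u x : Fin (n+1) → A) i₀.castSucc = u i₀ from
              Fin.snoc_castSucc _ _ _]
            exact (hPuv.2 i₀ j₀).1 (by simpa using hji)
          · rw [show (Fin.snoc u x : Fin (n+1) → A) (Fin.last n) = x from Fin.snoc_last _ _]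
            exact hxv j₀
        · refine absurd hji ?_
          have := i.isLt
          simp only [Fin.val_last]
          omega
      · -- i ≤ j
        intro hij
        rcases Fin.eq_castSucc_or_eq_last j with ⟨j₀, rfl⟩ | rfl
        · rw [Fin.snoc_castSucc]
          rcases Fin.eq_castSucc_or_eq_last i with ⟨i₀, rfl⟩ | rfl
          · rw [show (Fin.snoc u x : Fin (n+1) → A) i₀.castSucc = u i₀ from
              Fin.snoc_castSucc _ _ _]
            exact (hPuv.2 i₀ j₀).2 (by simpa using hij)
          · refine absurd hij ?_
            have := j₀.isLt
            simp only [Fin.val_last, Fin.coe_castSucc]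
            omega
        · rw [show (Fin.snoc v y : Fin (n+1) → A) (Fin.last n) = y from Fin.snoc_last _ _]
          exact hyu i
  obtain ⟨b, bb, hP⟩ := exists_seq_pairs P h0 hstep
  have hone : ∀ n, ‖b n‖ ≤ 1 ∧ ‖bb n‖ ≤ 1 ∧ ψ (b n) = F ψ ∧ χ (bb n) = G χ := by
    intro n
    have := (hP (n + 1)).1 ⟨n, Nat.lt_succ_self n⟩
    simpa using this
  refine ⟨b, bb, fun n => (hone n).1, fun n => (hone n).2.1, fun n => (hone n).2.2.1,
    fun n => (hone n).2.2.2, ?_, ?_⟩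
  · intro i j hji
    have := ((hP (i + 1)).2 ⟨i, Nat.lt_succ_self i⟩ ⟨j, by omega⟩).1 (by simpa using hji)
    simpa using this
  · intro i j hij
    have := ((hP (j + 1)).2 ⟨i, by omega⟩ ⟨j, Nat.lt_succ_self j⟩).2 (by simpa using hij)
    simpa using this

end Interp
end Arens

namespace Arens

section MP

variable {B A : Type*} [NonUnitalNormedRing B] [NormedSpace ℂ B]
  [NonUnitalNormedRing A] [NormedSpace ℂ A] [IsScalarTower ℂ A A] [SMulCommClass ℂ A A]

/-- If every bounded bilinear form on `B × A` is biregular and `B` contains a suitably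
normalized idempotent-like pair, then `A` is Arens regular. -/
theorem arensRegular_of_projArensRegular (e : B) (he : ‖e‖ ≤ 1) (ev : Dual ℂ B)
    (hev : ev (e * e) = 1) (hreg : ProjArensRegular B A) : ArensRegular A := by
  have key : ∀ F G : Dual ℂ (Dual ℂ A), ‖F‖ < 1 → ‖G‖ < 1 →
      ∀ φ : Dual ℂ A, fstArens A F G φ = sndArens A F G φ := by
    intro F G hF hG φ
    set ψ : Dual ℂ A := G.comp (adj (mulCLM A) φ) with hψ
    set χ : Dual ℂ A := F.comp (adj ((mulCLM A).flip) φ) with hχ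
    obtain ⟨b, bb, hb, hbb, hbψ, hbbχ, hcross1, hcross2⟩ := exists_interp F G hF hG φ ψ χ
    have hc1 : ∀ i j, j < i → φ (b i * bb j) = G χ := by
      intro i j hlt
      rw [hcross1 i j hlt]
      have heq : φ.comp ((mulCLM A).flip (bb j)) = adj ((mulCLM A).flip) φ (bb j) := by
        ext c; rfl
      rw [heq]
      exact hbbχ j
    have hc2 : ∀ i j, i ≤ j → φ (b i * bb j) = F ψ := by
      intro i j hle
      rw [hcross2 i j hle]
      have heq : φ.comp (mulCLM A (b i)) = adj (mulCLM A) φ (b i) := by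
        ext c; rfl
      rw [heq]
      exact hbψ i
    set m : B →L[ℂ] A →L[ℂ] ℂ := ev.smulRight φ with hm
    have hm_apply : ∀ (x : B) (c : A), m x c = ev x * φ c := fun x c => rfl
    have hinner1 : ∀ i, Tendsto (fun j => m ((fun _ : ℕ => e) i * (fun _ : ℕ => e) j)
        (b i * bb j)) atTop (𝓝 ((fun _ : ℕ => F ψ) i)) := by
      intro i
      refine Tendsto.congr' ?_ (tendsto_const_nhds (x := F ψ))
      filter_upwards [Filter.eventually_ge_atTop i] with j hj
      rw [hm_apply, hev, one_mul, hc2 i j hj]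
    have hinner2 : ∀ j, Tendsto (fun i => m ((fun _ : ℕ => e) i * (fun _ : ℕ => e) j)
        (b i * bb j)) atTop (𝓝 ((fun _ : ℕ => G χ) j)) := by
      intro j
      refine Tendsto.congr' ?_ (tendsto_const_nhds (x := G χ))
      filter_upwards [Filter.eventually_ge_atTop (j + 1)] with i hi
      rw [hm_apply, hev, one_mul, hc1 i j (by omega)]
    have hbig := hreg m (fun _ => e) (fun _ => e) b bb (fun _ => he) (fun _ => he) hb hbb
      (fun _ => F ψ) (fun _ => G χ) (F ψ) (G χ) hinner1 tendsto_const_nhds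
      hinner2 tendsto_const_nhds
    have e1 : adj (adj (mulCLM A)) G φ = ψ := by ext a; rfl
    have e2 : adj (adj ((mulCLM A).flip)) F φ = χ := by ext a; rfl
    calc fstArens A F G φ = F (adj (adj (mulCLM A)) G φ) := rfl
      _ = F ψ := by rw [e1]
      _ = G χ := hbig
      _ = G (adj (adj ((mulCLM A).flip)) F φ) := by rw [e2]
      _ = sndArens A F G φ := rfl
  intro F G
  ext φ
  set c : ℂ := (((1 + ‖F‖)⁻¹ : ℝ) : ℂ) with hc
  set d : ℂ := (((1 + ‖G‖)⁻¹ : ℝ) : ℂ) with hd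
  have hcpos : (0:ℝ) < (1 + ‖F‖)⁻¹ := by positivity
  have hdpos : (0:ℝ) < (1 + ‖G‖)⁻¹ := by positivity
  have hcF : ‖c • F‖ < 1 := by
    rw [norm_smul, hc, Complex.norm_real, Real.norm_of_nonneg hcpos.le]
    rw [← div_eq_inv_mul, div_lt_one (by positivity)]
    linarith [norm_nonneg F]
  have hdG : ‖d • G‖ < 1 := by
    rw [norm_smul, hd, Complex.norm_real, Real.norm_of_nonneg hdpos.le]
    rw [← div_eq_inv_mul, div_lt_one (by positivity)]
    linarith [norm_nonneg G]
  have hkey := key (c • F) (d • G) hcF hdG φ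
  have lin1 : fstArens A (c • F) (d • G) φ = c * (d * fstArens A F G φ) := by
    simp only [fstArens, map_smul, ContinuousLinearMap.smul_apply, smul_eq_mul]
    ring
  have lin2 : sndArens A (c • F) (d • G) φ = d * (c * sndArens A F G φ) := by
    simp only [sndArens, map_smul, ContinuousLinearMap.smul_apply, smul_eq_mul]
    ring
  rw [lin1, lin2] at hkey
  have hc0 : c ≠ 0 := by
    simp only [hc, ne_eq, Complex.ofReal_eq_zero]
    positivity
  have hd0 : d ≠ 0 := by
    simp only [hd, ne_eq, Complex.ofReal_eq_zero]
    positivity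
  have : (c * d) * fstArens A F G φ = (c * d) * sndArens A F G φ := by
    calc (c * d) * fstArens A F G φ = c * (d * fstArens A F G φ) := by ring
      _ = d * (c * sndArens A F G φ) := hkey
      _ = (c * d) * sndArens A F G φ := by ring
  exact mul_left_cancel₀ (mul_ne_zero hc0 hd0) this

end MP

end Arens

namespace Arens

section Ultra

variable {A : Type*} [NormedAddCommGroup A] [NormedSpace ℂ A]

/-- Ultrafilter limits along a bounded sequence define an element of the bidual. -/
theorem exists_ultrafilter_bidual (𝒰 : Ultrafilter ℕ) (c : ℕ → A) (hc : ∀ n, ‖c n‖ ≤ 1) :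
    ∃ F : Dual ℂ (Dual ℂ A), ∀ ψ : Dual ℂ A, Tendsto (fun n => ψ (c n)) 𝒰 (𝓝 (F ψ)) := by
  classical
  have hbd : ∀ (ψ : Dual ℂ A) (n : ℕ), ‖ψ (c n)‖ ≤ ‖ψ‖ := by
    intro ψ n
    calc ‖ψ (c n)‖ ≤ ‖ψ‖ * ‖c n‖ := ψ.le_opNorm _
      _ ≤ ‖ψ‖ * 1 := mul_le_mul_of_nonneg_left (hc n) (norm_nonneg ψ)
      _ = ‖ψ‖ := mul_one _
  have hlim : ∀ ψ : Dual ℂ A, ∃ z : ℂ, Tendsto (fun n => ψ (c n)) 𝒰 (𝓝 z) := by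
    intro ψ
    have hmem : ∀ n, ψ (c n) ∈ Metric.closedBall (0:ℂ) ‖ψ‖ := fun n => by
      rw [Metric.mem_closedBall, dist_zero_right]; exact hbd ψ n
    have hle : (𝒰.map fun n => ψ (c n) : Filter ℂ) ≤ 𝓟 (Metric.closedBall (0:ℂ) ‖ψ‖) := by
      rw [Filter.le_principal_iff]
      exact Filter.mem_map.2 (Filter.Eventually.of_forall hmem)
    obtain ⟨z, _, hz⟩ := (isCompact_closedBall (0:ℂ) ‖ψ‖).ultrafilter_le_nhds
      (𝒰.map fun n => ψ (c n)) hle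
    exact ⟨z, hz⟩
  choose L hL using hlim
  have hadd : ∀ ψ ψ', L (ψ + ψ') = L ψ + L ψ' := by
    intro ψ ψ'
    refine tendsto_nhds_unique (hL (ψ + ψ')) ?_
    have := (hL ψ).add (hL ψ')
    simpa using this
  have hsmul : ∀ (r : ℂ) ψ, L (r • ψ) = r * L ψ := by
    intro r ψ
    refine tendsto_nhds_unique (hL (r • ψ)) ?_
    have := (hL ψ).const_mul r
    simpa using this
  have hnorm : ∀ ψ, ‖L ψ‖ ≤ 1 * ‖ψ‖ := by
    intro ψ
    rw [one_mul]
    exact le_of_tendsto ((hL ψ).norm) (Filter.Eventually.of_forall fun n => hbd ψ n)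
  refine ⟨LinearMap.mkContinuous
    { toFun := L
      map_add' := hadd
      map_smul' := hsmul } 1 hnorm, fun ψ => hL ψ⟩

end Ultra

section lpHelpers

open scoped ENNReal

variable (p : ℝ≥0∞) [Fact (1 ≤ p)]

/-- Dominated convergence: multiplication against a fixed `ℓᵖ` element of a bounded,
coordinatewise null sequence is norm-null. -/
theorem tendsto_norm_mul_zero (hp2 : p ≠ ∞) (d : ℕ → lp (fun _ : ℕ => ℂ) p)
    (hd2 : ∀ t n, ‖(d t) n‖ ≤ 2) (hd0 : ∀ n, Tendsto (fun t => (d t) n) atTop (𝓝 0))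
    (y : lp (fun _ : ℕ => ℂ) p) (z : ℕ → lp (fun _ : ℕ => ℂ) p)
    (hz : ∀ t n, (z t) n = (d t) n * y n) :
    Tendsto (fun t => ‖z t‖) atTop (𝓝 0) := by
  have hp0 : p ≠ 0 := (zero_lt_one.trans_le (Fact.out (p := 1 ≤ p))).ne'
  have hpt : 0 < p.toReal := ENNReal.toReal_pos hp0 hp2
  have hS : Tendsto (fun t => ∑' n, ‖(z t) n‖ ^ p.toReal) atTop (𝓝 0) := by
    have h0 : (0:ℝ) = ∑' _ : ℕ, (0:ℝ) := by rw [tsum_zero]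
    rw [h0]
    refine tendsto_tsum_of_dominated_convergence
      (bound := fun n => 2 ^ p.toReal * ‖y n‖ ^ p.toReal) ?_ ?_ ?_
    · exact (((lp.memℓp y).summable hpt).mul_left _)
    · intro n
      have h1 : Tendsto (fun t => ‖(z t) n‖) atTop (𝓝 0) := by
        have := ((hd0 n).mul_const (y n)).norm
        simp only [zero_mul, norm_zero] at this
        refine this.congr fun t => ?_
        rw [hz t n]
      have := h1.rpow_const (Or.inr hpt.le)
      rwa [Real.zero_rpow hpt.ne'] at this
    · refine Filter.Eventually.of_forall fun t => fun n => ?_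
      rw [Real.norm_of_nonneg (Real.rpow_nonneg (norm_nonneg _) _)]
      have hle : ‖(z t) n‖ ≤ 2 * ‖y n‖ := by
        rw [hz t n, norm_mul]
        exact mul_le_mul_of_nonneg_right (hd2 t n) (norm_nonneg _)
      calc ‖(z t) n‖ ^ p.toReal ≤ (2 * ‖y n‖) ^ p.toReal :=
            Real.rpow_le_rpow (norm_nonneg _) hle hpt.le
        _ = 2 ^ p.toReal * ‖y n‖ ^ p.toReal := Real.mul_rpow (by norm_num) (norm_nonneg _)
  have hnorm : ∀ t, ‖z t‖ = (∑' n, ‖(z t) n‖ ^ p.toReal) ^ (1 / p.toReal) := fun t =>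
    lp.norm_eq_tsum_rpow hpt (z t)
  have := hS.rpow_const (Or.inr (by positivity : (0:ℝ) ≤ 1 / p.toReal))
  rw [Real.zero_rpow (by positivity : 1 / p.toReal ≠ 0)] at this
  exact this.congr fun t => (hnorm t).symm

/-- Extraction of a coordinatewise convergent subsequence from a bounded sequence in `ℓᵖ`. -/
theorem exists_coord_subseq (hp2 : p ≠ ∞) (x : ℕ → lp (fun _ : ℕ => ℂ) p)
    (hx : ∀ i, ‖x i‖ ≤ 1) :
    ∃ (k : ℕ → ℕ) (α : lp (fun _ : ℕ => ℂ) p), StrictMono k ∧ (∀ n, ‖α n‖ ≤ 1) ∧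
      ∀ n, Tendsto (fun i => x (k i) n) atTop (𝓝 (α n)) := by
  have hp0 : p ≠ 0 := (zero_lt_one.trans_le (Fact.out (p := 1 ≤ p))).ne'
  have hpt : 0 < p.toReal := ENNReal.toReal_pos hp0 hp2
  have hcoord : ∀ i n, ‖x i n‖ ≤ 1 := fun i n =>
    (lp.norm_apply_le_norm hp0 (x i) n).trans (hx i)
  have hcompact : IsCompact (Set.pi Set.univ fun _ : ℕ => Metric.closedBall (0:ℂ) 1) :=
    isCompact_univ_pi fun _ => isCompact_closedBall 0 1
  have hmem : ∀ i, (⇑(x i) : ℕ → ℂ) ∈ Set.pi Set.univ fun _ : ℕ => Metric.closedBall (0:ℂ) 1 :=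
    fun i n _ => by rw [Metric.mem_closedBall, dist_zero_right]; exact hcoord i n
  obtain ⟨a, ha, k, hk, hconv⟩ := hcompact.tendsto_subseq hmem
  have hconv' : ∀ n, Tendsto (fun i => x (k i) n) atTop (𝓝 (a n)) := by
    intro n
    have := ((continuous_apply n).tendsto a).comp hconv
    exact this
  have habd : ∀ n, ‖a n‖ ≤ 1 := by
    intro n
    have := ha n (Set.mem_univ n)
    rwa [Metric.mem_closedBall, dist_zero_right] at this
  have hmemℓp : Memℓp a p := by
    apply memℓp_gen
    refine summable_of_sum_le (fun n => Real.rpow_nonneg (norm_nonneg _) _)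
      (fun u => ?_ : ∀ u : Finset ℕ, ∑ n ∈ u, ‖a n‖ ^ p.toReal ≤ 1)
    have hsum_i : ∀ i, ∑ n ∈ u, ‖x (k i) n‖ ^ p.toReal ≤ 1 := by
      intro i
      calc ∑ n ∈ u, ‖x (k i) n‖ ^ p.toReal
          ≤ ∑' n, ‖x (k i) n‖ ^ p.toReal :=
            Summable.sum_le_tsum u (fun n _ => Real.rpow_nonneg (norm_nonneg _) _)
              ((lp.memℓp (x (k i))).summable hpt)
        _ = ‖x (k i)‖ ^ p.toReal := (lp.norm_rpow_eq_tsum hpt (x (k i))).symm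
        _ ≤ 1 := Real.rpow_le_one (norm_nonneg _) (hx _) hpt.le
    have htend : Tendsto (fun i => ∑ n ∈ u, ‖x (k i) n‖ ^ p.toReal) atTop
        (𝓝 (∑ n ∈ u, ‖a n‖ ^ p.toReal)) :=
      tendsto_finset_sum u fun n _ => ((hconv' n).norm).rpow_const (Or.inr hpt.le)
    exact le_of_tendsto htend (Filter.Eventually.of_forall hsum_i)
  exact ⟨k, ⟨a, hmemℓp⟩, hk, habd, hconv'⟩

end lpHelpers

end Arens

namespace Arens

section MPR

open scoped ENNReal

set_option maxHeartbeats 1600000 in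
/-- If `A` is Arens regular then every bounded bilinear form on `ℓᵖ × A` is biregular. -/
theorem projArensRegular_of_arensRegular (p : ℝ≥0∞) [Fact (1 ≤ p)] (hp2 : p ≠ ∞)
    {A : Type*} [NonUnitalNormedRing A] [NormedSpace ℂ A] [IsScalarTower ℂ A A]
    [SMulCommClass ℂ A A] (hA : ArensRegular A) :
    letI : NonUnitalNormedRing (lp (fun _ : ℕ => ℂ) p) := lpNonUnitalNormedRing p hp2
    ProjArensRegular (lp (fun _ : ℕ => ℂ) p) A := by
  letI : NonUnitalNormedRing (lp (fun _ : ℕ => ℂ) p) := lpNonUnitalNormedRing p hp2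
  intro m a aa2 b bb ha haa hb hbb g h L L' hg1 hgL hh1 hhL'
  have hp0 : p ≠ 0 := (zero_lt_one.trans_le (Fact.out (p := 1 ≤ p))).ne'
  have hpt : 0 < p.toReal := ENNReal.toReal_pos hp0 hp2
  obtain ⟨k, α, hk, hα1, hconva⟩ := exists_coord_subseq p hp2 a ha
  obtain ⟨l, β, hl, hβ1, hconvb⟩ := exists_coord_subseq p hp2 aa2 haa
  obtain ⟨𝒰, h𝒰⟩ := Ultrafilter.exists_le (atTop : Filter ℕ)
  obtain ⟨F, hF⟩ := exists_ultrafilter_bidual 𝒰 (fun i => b (k i)) (fun i => hb (k i))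
  obtain ⟨G, hG⟩ := exists_ultrafilter_bidual 𝒰 (fun j => bb (l j)) (fun j => hbb (l j))
  have hcoordA : ∀ i n, ‖a i n‖ ≤ 1 := fun i n =>
    (lp.norm_apply_le_norm hp0 (a i) n).trans (ha i)
  have hcoordB : ∀ j n, ‖aa2 j n‖ ≤ 1 := fun j n =>
    (lp.norm_apply_le_norm hp0 (aa2 j) n).trans (haa j)
  -- convergence of products in norm
  have hc1 : ∀ i, Tendsto (fun j => ‖a (k i) * aa2 (l j) - a (k i) * β‖) atTop (𝓝 0) := by
    intro i
    refine tendsto_norm_mul_zero p hp2 (fun j => aa2 (l j) - β) ?_ ?_ (a (k i)) _ ?_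
    · intro j n
      rw [lp.coeFn_sub, Pi.sub_apply]
      calc ‖aa2 (l j) n - β n‖ ≤ ‖aa2 (l j) n‖ + ‖β n‖ := norm_sub_le _ _
        _ ≤ 1 + 1 := add_le_add (hcoordB _ n) (hβ1 n)
        _ = 2 := by norm_num
    · intro n
      have := (hconvb n).sub (tendsto_const_nhds (x := β n))
      rw [sub_self] at this
      refine this.congr fun j => ?_
      rw [lp.coeFn_sub, Pi.sub_apply]
    · intro j n
      show (a (k i) * aa2 (l j) - a (k i) * β : lp (fun _ : ℕ => ℂ) p) n
        = (aa2 (l j) - β : lp (fun _ : ℕ => ℂ) p) n * (a (k i) : lp (fun _ : ℕ => ℂ) p) n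
      have h1 : (a (k i) * aa2 (l j) - a (k i) * β : lp (fun _ : ℕ => ℂ) p) n = a (k i) n * aa2 (l j) n - a (k i) n * β n := by
        rw [lp.coeFn_sub, Pi.sub_apply]; rfl
      have h2 : (aa2 (l j) - β : lp (fun _ : ℕ => ℂ) p) n = (aa2 (l j) : lp (fun _ : ℕ => ℂ) p) n - (β : lp (fun _ : ℕ => ℂ) p) n := by
        rw [lp.coeFn_sub, Pi.sub_apply]
      rw [h1, h2]
      ring
  have hc2 : Tendsto (fun i => ‖a (k i) * β - α * β‖) atTop (𝓝 0) := by
    refine tendsto_norm_mul_zero p hp2 (fun i => a (k i) - α) ?_ ?_ β _ ?_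
    · intro i n
      rw [lp.coeFn_sub, Pi.sub_apply]
      calc ‖a (k i) n - α n‖ ≤ ‖a (k i) n‖ + ‖α n‖ := norm_sub_le _ _
        _ ≤ 1 + 1 := add_le_add (hcoordA _ n) (hα1 n)
        _ = 2 := by norm_num
    · intro n
      have := (hconva n).sub (tendsto_const_nhds (x := α n))
      rw [sub_self] at this
      refine this.congr fun i => ?_
      rw [lp.coeFn_sub, Pi.sub_apply]
    · intro i n
      show (a (k i) * β - α * β : lp (fun _ : ℕ => ℂ) p) n
        = (a (k i) - α : lp (fun _ : ℕ => ℂ) p) n * (β : lp (fun _ : ℕ => ℂ) p) n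
      have h1 : (a (k i) * β - α * β : lp (fun _ : ℕ => ℂ) p) n = a (k i) n * β n - α n * β n := by
        rw [lp.coeFn_sub, Pi.sub_apply]; rfl
      have h2 : (a (k i) - α : lp (fun _ : ℕ => ℂ) p) n = (a (k i) : lp (fun _ : ℕ => ℂ) p) n - (α : lp (fun _ : ℕ => ℂ) p) n := by
        rw [lp.coeFn_sub, Pi.sub_apply]
      rw [h1, h2]
      ring
  have hc3 : Tendsto (fun j => ‖α * aa2 (l j) - α * β‖) atTop (𝓝 0) := by
    refine tendsto_norm_mul_zero p hp2 (fun j => aa2 (l j) - β) ?_ ?_ α _ ?_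
    · intro j n
      rw [lp.coeFn_sub, Pi.sub_apply]
      calc ‖aa2 (l j) n - β n‖ ≤ ‖aa2 (l j) n‖ + ‖β n‖ := norm_sub_le _ _
        _ ≤ 1 + 1 := add_le_add (hcoordB _ n) (hβ1 n)
        _ = 2 := by norm_num
    · intro n
      have := (hconvb n).sub (tendsto_const_nhds (x := β n))
      rw [sub_self] at this
      refine this.congr fun j => ?_
      rw [lp.coeFn_sub, Pi.sub_apply]
    · intro j n
      show (α * aa2 (l j) - α * β : lp (fun _ : ℕ => ℂ) p) n
        = (aa2 (l j) - β : lp (fun _ : ℕ => ℂ) p) n * (α : lp (fun _ : ℕ => ℂ) p) n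
      have h1 : (α * aa2 (l j) - α * β : lp (fun _ : ℕ => ℂ) p) n = α n * aa2 (l j) n - α n * β n := by
        rw [lp.coeFn_sub, Pi.sub_apply]; rfl
      have h2 : (aa2 (l j) - β : lp (fun _ : ℕ => ℂ) p) n = (aa2 (l j) : lp (fun _ : ℕ => ℂ) p) n - (β : lp (fun _ : ℕ => ℂ) p) n := by
        rw [lp.coeFn_sub, Pi.sub_apply]
      rw [h1, h2]
      ring
  have hc4 : ∀ j, Tendsto (fun i => ‖a (k i) * aa2 (l j) - α * aa2 (l j)‖) atTop (𝓝 0) := by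
    intro j
    refine tendsto_norm_mul_zero p hp2 (fun i => a (k i) - α) ?_ ?_ (aa2 (l j)) _ ?_
    · intro i n
      rw [lp.coeFn_sub, Pi.sub_apply]
      calc ‖a (k i) n - α n‖ ≤ ‖a (k i) n‖ + ‖α n‖ := norm_sub_le _ _
        _ ≤ 1 + 1 := add_le_add (hcoordA _ n) (hα1 n)
        _ = 2 := by norm_num
    · intro n
      have := (hconva n).sub (tendsto_const_nhds (x := α n))
      rw [sub_self] at this
      refine this.congr fun i => ?_
      rw [lp.coeFn_sub, Pi.sub_apply]
    · intro i n
      show (a (k i) * aa2 (l j) - α * aa2 (l j) : lp (fun _ : ℕ => ℂ) p) n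
        = (a (k i) - α : lp (fun _ : ℕ => ℂ) p) n * (aa2 (l j) : lp (fun _ : ℕ => ℂ) p) n
      have h1 : (a (k i) * aa2 (l j) - α * aa2 (l j) : lp (fun _ : ℕ => ℂ) p) n = a (k i) n * aa2 (l j) n - α n * aa2 (l j) n := by
        rw [lp.coeFn_sub, Pi.sub_apply]; rfl
      have h2 : (a (k i) - α : lp (fun _ : ℕ => ℂ) p) n = (a (k i) : lp (fun _ : ℕ => ℂ) p) n - (α : lp (fun _ : ℕ => ℂ) p) n := by
        rw [lp.coeFn_sub, Pi.sub_apply]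
      rw [h1, h2]
      ring
  -- norm bound for products on the `A` side
  have hBB : ∀ i j, ‖b (k i) * bb (l j)‖ ≤ 1 := by
    intro i j
    calc ‖b (k i) * bb (l j)‖ ≤ ‖b (k i)‖ * ‖bb (l j)‖ := norm_mul_le _ _
      _ ≤ 1 := mul_le_one₀ (hb _) (norm_nonneg _) (hbb _)
  -- difference estimate for the bilinear form
  have hdiff : ∀ (u u' : lp (fun _ : ℕ => ℂ) p) (w : A), ‖w‖ ≤ 1 →
      ‖m u w - m u' w‖ ≤ ‖m‖ * ‖u - u'‖ := by
    intro u u' w hw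
    have e : m u w - m u' w = m (u - u') w := by
      rw [map_sub, ContinuousLinearMap.sub_apply]
    rw [e]
    calc ‖m (u - u') w‖ ≤ ‖m‖ * ‖u - u'‖ * ‖w‖ := m.le_opNorm₂ _ _
      _ ≤ ‖m‖ * ‖u - u'‖ * 1 := by
          refine mul_le_mul_of_nonneg_left hw ?_
          positivity
      _ = ‖m‖ * ‖u - u'‖ := mul_one _
  set φL : Dual ℂ A := m (α * β) with hφL
  set χ' : Dual ℂ A := G.comp (adj (mulCLM A) φL) with hχ'
  set σ : Dual ℂ A := F.comp (adj ((mulCLM A).flip) φL) with hσ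
  -- Step A : inner limits via G
  have hstepA : ∀ i, g (k i) = G ((m (a (k i) * β)).comp (mulCLM A (b (k i)))) := by
    intro i
    have h1 : Tendsto (fun j => m (a (k i) * aa2 (l j)) (b (k i) * bb (l j))) atTop
        (𝓝 (g (k i))) := (hg1 (k i)).comp hl.tendsto_atTop
    have hd : Tendsto (fun j => m (a (k i) * aa2 (l j)) (b (k i) * bb (l j))
        - m (a (k i) * β) (b (k i) * bb (l j))) atTop (𝓝 0) := by
      refine squeeze_zero_norm (fun j => hdiff _ _ _ (hBB i j)) ?_
      have := (hc1 i).const_mul ‖m‖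
      rw [mul_zero] at this
      exact this
    have h2 : Tendsto (fun j => m (a (k i) * β) (b (k i) * bb (l j))) atTop
        (𝓝 (g (k i))) := by
      have := h1.sub hd
      rw [sub_zero] at this
      refine this.congr fun j => ?_
      ring
    exact tendsto_nhds_unique (h2.mono_left h𝒰)
      (hG ((m (a (k i) * β)).comp (mulCLM A (b (k i)))))
  -- Step B : L = F χ'
  have hψdiff : ∀ i, ‖G ((m (a (k i) * β)).comp (mulCLM A (b (k i)))) - χ' (b (k i))‖
      ≤ ‖G‖ * (‖m‖ * ‖a (k i) * β - α * β‖) := by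
    intro i
    have e0 : adj (mulCLM A) φL (b (k i)) = φL.comp (mulCLM A (b (k i))) := by
      ext c; rfl
    have e1 : χ' (b (k i)) = G (φL.comp (mulCLM A (b (k i)))) := by
      rw [hχ', ContinuousLinearMap.comp_apply, e0]
    rw [e1, ← map_sub]
    have e2 : (m (a (k i) * β)).comp (mulCLM A (b (k i))) - φL.comp (mulCLM A (b (k i)))
        = (m (a (k i) * β) - φL).comp (mulCLM A (b (k i))) := by
      ext c
      simp [ContinuousLinearMap.sub_apply]
    rw [e2]
    have e3 : ‖(m (a (k i) * β) - φL).comp (mulCLM A (b (k i)))‖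
        ≤ ‖m‖ * ‖a (k i) * β - α * β‖ := by
      calc ‖(m (a (k i) * β) - φL).comp (mulCLM A (b (k i)))‖
          ≤ ‖m (a (k i) * β) - φL‖ * ‖mulCLM A (b (k i))‖ :=
            ContinuousLinearMap.opNorm_comp_le _ _
        _ ≤ (‖m‖ * ‖a (k i) * β - α * β‖) * 1 := by
            refine mul_le_mul ?_ ?_ (norm_nonneg _) (by positivity)
            · rw [hφL, ← map_sub]
              exact m.le_opNorm _
            · exact (ContinuousLinearMap.opNorm_mul_apply_le ℂ A _).trans (hb _)
        _ = ‖m‖ * ‖a (k i) * β - α * β‖ := mul_one _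
    calc ‖G ((m (a (k i) * β) - φL).comp (mulCLM A (b (k i))))‖
        ≤ ‖G‖ * ‖(m (a (k i) * β) - φL).comp (mulCLM A (b (k i)))‖ := G.le_opNorm _
      _ ≤ ‖G‖ * (‖m‖ * ‖a (k i) * β - α * β‖) :=
          mul_le_mul_of_nonneg_left e3 (norm_nonneg G)
  have hχ'L : Tendsto (fun i => χ' (b (k i))) atTop (𝓝 L) := by
    have hgk : Tendsto (fun i => g (k i)) atTop (𝓝 L) := hgL.comp hk.tendsto_atTop
    have hd : Tendsto (fun i => g (k i) - χ' (b (k i))) atTop (𝓝 0) := by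
      have hbound : Tendsto (fun i => ‖G‖ * (‖m‖ * ‖a (k i) * β - α * β‖)) atTop (𝓝 0) := by
        have := (hc2.const_mul ‖m‖).const_mul ‖G‖
        rw [mul_zero, mul_zero] at this
        exact this.congr fun i => by ring
      refine squeeze_zero_norm (fun i => ?_) hbound
      rw [hstepA i]
      exact hψdiff i
    have := hgk.sub hd
    rw [sub_zero] at this
    refine this.congr fun i => ?_
    ring
  have hLeq : L = F χ' := tendsto_nhds_unique (hχ'L.mono_left h𝒰) (hF χ')
  -- Step C : L' = G σ
  have hstepC : ∀ j, h (l j) = F ((m (α * aa2 (l j))).comp ((mulCLM A).flip (bb (l j)))) := by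
    intro j
    have h1 : Tendsto (fun i => m (a (k i) * aa2 (l j)) (b (k i) * bb (l j))) atTop
        (𝓝 (h (l j))) := (hh1 (l j)).comp hk.tendsto_atTop
    have hd : Tendsto (fun i => m (a (k i) * aa2 (l j)) (b (k i) * bb (l j))
        - m (α * aa2 (l j)) (b (k i) * bb (l j))) atTop (𝓝 0) := by
      refine squeeze_zero_norm (fun i => hdiff _ _ _ (hBB i j)) ?_
      have := (hc4 j).const_mul ‖m‖
      rw [mul_zero] at this
      exact this
    have h2 : Tendsto (fun i => m (α * aa2 (l j)) (b (k i) * bb (l j))) atTop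
        (𝓝 (h (l j))) := by
      have := h1.sub hd
      rw [sub_zero] at this
      refine this.congr fun i => ?_
      ring
    exact tendsto_nhds_unique (h2.mono_left h𝒰)
      (hF ((m (α * aa2 (l j))).comp ((mulCLM A).flip (bb (l j)))))
  have hflip_norm : ∀ c : A, ‖(mulCLM A).flip c‖ ≤ ‖c‖ := by
    intro c
    refine ContinuousLinearMap.opNorm_le_bound _ (norm_nonneg c) fun x => ?_
    have : (mulCLM A).flip c x = x * c := rfl
    rw [this, mul_comm ‖c‖ ‖x‖]
    exact norm_mul_le _ _
  have hρdiff : ∀ j, ‖F ((m (α * aa2 (l j))).comp ((mulCLM A).flip (bb (l j)))) - σ (bb (l j))‖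
      ≤ ‖F‖ * (‖m‖ * ‖α * aa2 (l j) - α * β‖) := by
    intro j
    have e0 : adj ((mulCLM A).flip) φL (bb (l j)) = φL.comp ((mulCLM A).flip (bb (l j))) := by
      ext c; rfl
    have e1 : σ (bb (l j)) = F (φL.comp ((mulCLM A).flip (bb (l j)))) := by
      rw [hσ, ContinuousLinearMap.comp_apply, e0]
    rw [e1, ← map_sub]
    have e2 : (m (α * aa2 (l j))).comp ((mulCLM A).flip (bb (l j)))
        - φL.comp ((mulCLM A).flip (bb (l j)))
        = (m (α * aa2 (l j)) - φL).comp ((mulCLM A).flip (bb (l j))) := by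
      ext c
      simp [ContinuousLinearMap.sub_apply]
    rw [e2]
    have e3 : ‖(m (α * aa2 (l j)) - φL).comp ((mulCLM A).flip (bb (l j)))‖
        ≤ ‖m‖ * ‖α * aa2 (l j) - α * β‖ := by
      calc ‖(m (α * aa2 (l j)) - φL).comp ((mulCLM A).flip (bb (l j)))‖
          ≤ ‖m (α * aa2 (l j)) - φL‖ * ‖(mulCLM A).flip (bb (l j))‖ :=
            ContinuousLinearMap.opNorm_comp_le _ _
        _ ≤ (‖m‖ * ‖α * aa2 (l j) - α * β‖) * 1 := by
            refine mul_le_mul ?_ ?_ (norm_nonneg _) (by positivity)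
            · rw [hφL, ← map_sub]
              exact m.le_opNorm _
            · exact (hflip_norm _).trans (hbb _)
        _ = ‖m‖ * ‖α * aa2 (l j) - α * β‖ := mul_one _
    calc ‖F ((m (α * aa2 (l j)) - φL).comp ((mulCLM A).flip (bb (l j))))‖
        ≤ ‖F‖ * ‖(m (α * aa2 (l j)) - φL).comp ((mulCLM A).flip (bb (l j)))‖ := F.le_opNorm _
      _ ≤ ‖F‖ * (‖m‖ * ‖α * aa2 (l j) - α * β‖) := mul_le_mul_of_nonneg_left e3 (norm_nonneg F)
  have hσL' : Tendsto (fun j => σ (bb (l j))) atTop (𝓝 L') := by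
    have hhl : Tendsto (fun j => h (l j)) atTop (𝓝 L') := hhL'.comp hl.tendsto_atTop
    have hd : Tendsto (fun j => h (l j) - σ (bb (l j))) atTop (𝓝 0) := by
      have hbound : Tendsto (fun j => ‖F‖ * (‖m‖ * ‖α * aa2 (l j) - α * β‖)) atTop (𝓝 0) := by
        have := (hc3.const_mul ‖m‖).const_mul ‖F‖
        rw [mul_zero, mul_zero] at this
        exact this.congr fun j => by ring
      refine squeeze_zero_norm (fun j => ?_) hbound
      rw [hstepC j]
      exact hρdiff j
    have := hhl.sub hd
    rw [sub_zero] at this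
    refine this.congr fun j => ?_
    ring
  have hL'eq : L' = G σ := tendsto_nhds_unique (hσL'.mono_left h𝒰) (hG σ)
  -- Step D : conclude via Arens regularity
  have e1 : adj (adj (mulCLM A)) G φL = χ' := by ext c; rfl
  have e2 : adj (adj ((mulCLM A).flip)) F φL = σ := by ext c; rfl
  have harens := hA F G
  calc L = F χ' := hLeq
    _ = F (adj (adj (mulCLM A)) G φL) := by rw [e1]
    _ = fstArens A F G φL := rfl
    _ = sndArens A F G φL := by rw [harens]
    _ = G (adj (adj ((mulCLM A).flip)) F φL) := rfl
    _ = G σ := by rw [e2]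
    _ = L' := hL'eq.symm

end MPR

end Arens

open scoped ENNReal

/-- **Example 2-9 (1).** For `1 < p < ∞`, the projective tensor product `ℓᵖ ⊗̂ A`
(with `ℓᵖ` carrying pointwise multiplication) is Arens regular if and only if `A` is
Arens regular. -/
theorem lp_projTensor_arensRegular_iff
    {A : Type*} [NonUnitalNormedRing A] [NormedSpace ℂ A]
    [IsScalarTower ℂ A A] [SMulCommClass ℂ A A] [CompleteSpace A]
    (p : ENNReal) (hp1 : 1 < p) (hp2 : p ≠ ∞) :
    haveI : Fact (1 ≤ p) := ⟨hp1.le⟩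
    letI : NonUnitalNormedRing (lp (fun _ : ℕ => ℂ) p) :=
      Arens.lpNonUnitalNormedRing p hp2
    (Arens.ProjArensRegular (lp (fun _ : ℕ => ℂ) p) A ↔ Arens.ArensRegular A) := by
  haveI : Fact (1 ≤ p) := ⟨hp1.le⟩
  letI : NonUnitalNormedRing (lp (fun _ : ℕ => ℂ) p) := Arens.lpNonUnitalNormedRing p hp2
  have hp0 : p ≠ 0 := (zero_lt_one.trans_le hp1.le).ne'
  have hpt : 0 < p.toReal := ENNReal.toReal_pos hp0 hp2
  constructor
  · intro hreg
    set e : lp (fun _ : ℕ => ℂ) p := lp.single p 0 1 with he_def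
    have he : ‖e‖ ≤ 1 := by
      have := lp.norm_single (E := fun _ : ℕ => ℂ) (zero_lt_one.trans hp1) 0 (1:ℂ)
      rw [he_def]
      rw [this]
      simp
    set ev : Dual ℂ (lp (fun _ : ℕ => ℂ) p) := LinearMap.mkContinuous
      { toFun := fun f => f 0
        map_add' := fun f g => rfl
        map_smul' := fun c f => rfl } 1
      (fun f => by rw [one_mul]; exact lp.norm_apply_le_norm hp0 f 0) with hev_def
    have hev : ev (e * e) = 1 := by
      have h1 : ev (e * e) = e 0 * e 0 := rfl
      rw [h1, he_def, lp.single_apply_self, one_mul]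
    exact Arens.arensRegular_of_projArensRegular e he ev hev hreg
  · intro hA
    exact Arens.projArensRegular_of_arensRegular p hp2 hA
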